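/- Weak duality for the guessing-probability SDP: let M be an m-outcome POVM in dimension d, let φ ∈ ℂ^d be a unit vector, let K be a valid decomposition of M, and let Y : Fin m → Matrix (Fin d) (Fin d) ℂ and G : Fin m → Matrix (Fin d) (Fin d) ℂ be families of Hermitian matrices with Matrix.trace (G j) = 0 for all j and with Y x − (if x = j then |φ⟩⟨φ| else 0) − G j positive semidefinite for all x and j. Then ∑_j ⟪φ, (K j j)·φ⟫ ≤ Re (∑_x Matrix.trace (Y x * M x)). -/

import Mathlib

open Matrix ComplexOrder

noncomputable section

lemma trace_nonneg_of_psd {n : ℕ} {A : Matrix (Fin n) (Fin n) ℂ}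
    (hA : A.PosSemidef) : 0 ≤ A.trace := by
  unfold Matrix.trace
  apply Finset.sum_nonneg
  intro i _
  exact hA.diag_nonneg

lemma trace_mul_nonneg_of_psd {n : ℕ} {A B : Matrix (Fin n) (Fin n) ℂ}
    (hA : A.PosSemidef) (hB : B.PosSemidef) : 0 ≤ (A * B).trace := by
  obtain ⟨C, hC⟩ : ∃ C : Matrix (Fin n) (Fin n) ℂ, B = Cᴴ * C := by
    open scoped MatrixOrder in
    exact CStarAlgebra.nonneg_iff_eq_star_mul_self.mp hB.nonneg
  subst hC
  rw [← mul_assoc, Matrix.trace_mul_cycle]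
  exact trace_nonneg_of_psd (hA.mul_mul_conjTranspose_same C)

lemma trace_vecMulVec_mul {n : ℕ} (φ : Fin n → ℂ) (A : Matrix (Fin n) (Fin n) ℂ) :
    (vecMulVec φ (star φ) * A).trace = star φ ⬝ᵥ A.mulVec φ := by
  simp only [Matrix.trace, Matrix.diag, Matrix.mul_apply, Matrix.vecMulVec_apply,
    dotProduct, Matrix.mulVec, Pi.star_apply]
  rw [Finset.sum_comm]
  apply Finset.sum_congr rfl
  intro k _
  rw [Finset.mul_sum]
  apply Finset.sum_congr rfl
  intro i _
  ring

/-- `K` is a valid decomposition of the POVM `M`. -/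
def IsDecomp {m d : ℕ} (M : Fin m → Matrix (Fin d) (Fin d) ℂ)
    (K : Fin m → Fin m → Matrix (Fin d) (Fin d) ℂ) : Prop :=
  (∀ x j, (K x j).PosSemidef) ∧
  (∀ j, (d : ℂ) • ∑ x, K x j = (∑ x, (K x j).trace) • (1 : Matrix (Fin d) (Fin d) ℂ)) ∧
  (∀ x, ∑ j, K x j = M x)

/-- Eve's objective for the decomposition `K` and the state `φ`:
`∑_j ⟪φ, (K j j) φ⟫`. -/
def objective {m d : ℕ} (K : Fin m → Fin m → Matrix (Fin d) (Fin d) ℂ)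
    (φ : Fin d → ℂ) : ℝ :=
  ∑ j, (star φ ⬝ᵥ (K j j).mulVec φ).re

/-- Weak duality for the guessing-probability SDP: any feasible dual variables `Y`, `G`
bound the objective of any valid decomposition from above by `Re ∑_x tr (Y x · M x)`. -/
theorem guessing_sdp_weak_duality
    {m d : ℕ}
    (M : Fin m → Matrix (Fin d) (Fin d) ℂ)
    (hpsd : ∀ x, (M x).PosSemidef) (hsum : ∑ x, M x = 1)
    (φ : Fin d → ℂ) (hφ : star φ ⬝ᵥ φ = 1)
    (K : Fin m → Fin m → Matrix (Fin d) (Fin d) ℂ) (hK : IsDecomp M K)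
    (Y G : Fin m → Matrix (Fin d) (Fin d) ℂ)
    (hY : ∀ x, (Y x).IsHermitian) (hG : ∀ j, (G j).IsHermitian)
    (hGtr : ∀ j, (G j).trace = 0)
    (hfeas : ∀ x j,
      (Y x - (if x = j then vecMulVec φ (star φ) else 0) - G j).PosSemidef) :
    objective K φ ≤ (∑ x, (Y x * M x).trace).re := by
  obtain ⟨hKpsd, hKunif, hKsum⟩ := hK
  set P : Matrix (Fin d) (Fin d) ℂ := vecMulVec φ (star φ) with hP
  -- the G-terms vanish
  have hS3 : ∀ j, ∑ x, (G j * K x j).trace = 0 := by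
    intro j
    have hsum' : ∑ x, (G j * K x j).trace = (G j * ∑ x, K x j).trace := by
      rw [Finset.mul_sum, Matrix.trace_sum]
    rcases Nat.eq_zero_or_pos d with hd | hd
    · subst hd
      simp [Matrix.trace]
    · have hdc : (d : ℂ) ≠ 0 := Nat.cast_ne_zero.mpr hd.ne'
      have hmul : (d : ℂ) * (G j * ∑ x, K x j).trace = 0 := by
        calc (d : ℂ) * (G j * ∑ x, K x j).trace
            = (G j * ((d : ℂ) • ∑ x, K x j)).trace := by
              rw [Matrix.mul_smul, Matrix.trace_smul, smul_eq_mul]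
          _ = (G j * ((∑ x, (K x j).trace) • 1)).trace := by rw [hKunif j]
          _ = (∑ x, (K x j).trace) * (G j).trace := by
              rw [Matrix.mul_smul, mul_one, Matrix.trace_smul, smul_eq_mul]
          _ = 0 := by rw [hGtr j, mul_zero]
      rw [hsum']
      exact (mul_eq_zero.mp hmul).resolve_left hdc
  -- key pointwise nonnegativity
  have key2 : 0 ≤ ∑ x, ∑ j, ((Y x - (if x = j then P else 0) - G j) * K x j).trace :=
    Finset.sum_nonneg fun x _ => Finset.sum_nonneg fun j _ =>
      trace_mul_nonneg_of_psd (hfeas x j) (hKpsd x j)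
  -- expand the sum
  have e1 : ∀ x j, ((Y x - (if x = j then P else 0) - G j) * K x j).trace
      = (Y x * K x j).trace - (if x = j then (P * K x j).trace else 0)
        - (G j * K x j).trace := by
    intro x j
    rw [sub_mul, sub_mul, Matrix.trace_sub, Matrix.trace_sub, ite_mul, zero_mul,
      apply_ite Matrix.trace, Matrix.trace_zero]
  have expand : ∑ x, ∑ j, ((Y x - (if x = j then P else 0) - G j) * K x j).trace
      = (∑ x, (Y x * M x).trace) - ∑ x, (P * K x x).trace := by
    simp only [e1, Finset.sum_sub_distrib]
    have h1 : ∀ x, ∑ j, (Y x * K x j).trace = (Y x * M x).trace := by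
      intro x
      rw [← hKsum x, Finset.mul_sum, Matrix.trace_sum]
    have h2 : ∀ x : Fin m, ∑ j, (if x = j then (P * K x j).trace else 0)
        = (P * K x x).trace := by
      intro x
      simp [Finset.sum_ite_eq]
    have h3 : ∑ x, ∑ j, (G j * K x j).trace = 0 := by
      rw [Finset.sum_comm]
      simp [hS3]
    rw [Finset.sum_congr rfl fun x _ => h1 x, Finset.sum_congr rfl fun x _ => h2 x, h3,
      sub_zero]
  rw [expand] at key2
  have hle : ∑ x, (P * K x x).trace ≤ ∑ x, (Y x * M x).trace := sub_nonneg.mp key2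
  have hre := (Complex.le_def.mp hle).1
  have hobj : objective K φ = (∑ x, (P * K x x).trace).re := by
    rw [Complex.re_sum]
    exact Finset.sum_congr rfl fun j _ => by rw [hP, trace_vecMulVec_mul]
  rw [hobj]
  exact hre
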